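/- Suppose Z is a random vector in ℝ^{d_z}, V is a real random variable with atomless (continuous) distribution, h : ℝ^{d_z} × ℝ → ℝ is measurable and strictly increasing in its second argument, X = h(Z, V), and V is independent of Z. Then the conditional rank R = F_{X|Z}(X | Z) is uniformly distributed on the interval [0, 1]; that is, the law of R is the uniform probability measure on [0,1]. -/

import Mathlib

open MeasureTheory ProbabilityTheory
open Set Filter Topology

lemma measurable_uncurry_of_rightCont {α : Type*} [MeasurableSpace α]
    {F : α → ℝ → ℝ} (hmeas : ∀ x, Measurable fun z => F z x)
    (hrc : ∀ z x, ContinuousWithinAt (F z) (Set.Ici x) x) :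
    Measurable fun p : α × ℝ => F p.1 p.2 := by
  have happrox : ∀ n : ℕ, Measurable fun p : α × ℝ =>
      F p.1 ((⌈p.2 * (n + 1)⌉ : ℝ) / (n + 1)) := by
    intro n
    have h1 : Measurable fun q : α × ℤ => F q.1 ((q.2 : ℝ) / (n + 1)) :=
      measurable_from_prod_countable_left fun k => hmeas ((k : ℝ) / (n + 1))
    exact h1.comp (measurable_fst.prodMk ((measurable_snd.mul_const _).ceil))
  refine measurable_of_tendsto_metrizable happrox ?_
  rw [tendsto_pi_nhds]
  intro p
  have hpos : ∀ n : ℕ, (0:ℝ) < (n:ℝ) + 1 := fun n => by positivity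
  set u : ℕ → ℝ := fun n => (⌈p.2 * (n + 1)⌉ : ℝ) / (n + 1) with hu
  have hge : ∀ n, p.2 ≤ u n := by
    intro n
    rw [le_div_iff₀ (hpos n)]
    exact Int.le_ceil _
  have hle : ∀ n, u n ≤ p.2 + 1 / (n + 1) := by
    intro n
    rw [div_le_iff₀ (hpos n)]
    have := (Int.ceil_lt_add_one (p.2 * (n + 1))).le
    calc (⌈p.2 * (n + 1)⌉ : ℝ) ≤ p.2 * (n + 1) + 1 := this
    _ = (p.2 + 1 / (n + 1)) * (n + 1) := by field_simp
  have hlim : Tendsto u atTop (𝓝 p.2) := by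
    have h2 : Tendsto (fun n : ℕ => p.2 + 1 / ((n:ℝ) + 1)) atTop (𝓝 (p.2 + 0)) :=
      tendsto_const_nhds.add (tendsto_one_div_add_atTop_nhds_zero_nat)
    rw [add_zero] at h2
    exact tendsto_of_tendsto_of_tendsto_of_le_of_le tendsto_const_nhds h2 hge hle
  have : Tendsto u atTop (𝓝[Set.Ici p.2] p.2) :=
    tendsto_nhdsWithin_of_tendsto_nhds_of_eventually_within _ hlim
      (Eventually.of_forall hge)
  exact (hrc p.1 p.2).tendsto.comp this

lemma cdf_comp_uniform (ν : Measure ℝ) [IsProbabilityMeasure ν] (hν : ∀ x, ν {x} = 0)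
    {t : ℝ} (ht0 : 0 ≤ t) (ht1 : t ≤ 1) :
    ν {x | (ν (Iic x)).toReal ≤ t} = ENNReal.ofReal t := by
  have hc : ∀ x, cdf ν x = (ν (Iic x)).toReal := fun x => by rw [cdf_eq_real, measureReal_def]
  have hsets : {x | (ν (Iic x)).toReal ≤ t} = {x | cdf ν x ≤ t} := by
    ext x; simp [hc]
  rw [hsets]
  have hcont : Continuous (cdf ν) := by
    rw [continuous_iff_continuousAt]
    intro x
    rw [(monotone_cdf ν).continuousAt_iff_leftLim_eq_rightLim]
    rw [StieltjesFunction.rightLim_eq]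
    have hsing := (cdf ν).measure_singleton x
    rw [measure_cdf, hν x] at hsing
    have h1 : cdf ν x - Function.leftLim (cdf ν) x ≤ 0 := by
      by_contra hlt
      push_neg at hlt
      rw [eq_comm, ENNReal.ofReal_eq_zero] at hsing
      linarith
    have h2 : Function.leftLim (cdf ν) x ≤ cdf ν x :=
      (monotone_cdf ν).leftLim_le le_rfl
    have : Function.leftLim (⇑(cdf ν)) x = cdf ν x := by linarith
    exact this
  set S := {x | cdf ν x ≤ t} with hS
  have hSclosed : IsClosed S := isClosed_le hcont continuous_const
  rcases eq_empty_or_nonempty S with hemp | hne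
  · have ht : t = 0 := by
      by_contra hne0
      have htpos : 0 < t := lt_of_le_of_ne ht0 (Ne.symm hne0)
      have := (tendsto_cdf_atBot ν).eventually_lt_const htpos
      rcases this.exists with ⟨x, hx⟩
      have hxS : x ∈ {x | cdf ν x ≤ t} := hx.le
      rw [← hS, hemp] at hxS
      exact hxS
    simp [hemp, ht]
  by_cases huniv : S = univ
  · have hge1 : (1:ℝ) ≤ t := by
      refine le_of_tendsto (tendsto_cdf_atTop ν) (Eventually.of_forall fun x => ?_)
      have : x ∈ S := huniv ▸ mem_univ x
      exact this
    have ht : t = 1 := le_antisymm ht1 hge1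
    rw [huniv, ht]
    simp [measure_univ]
  · have hbdd : BddAbove S := by
      rcases (ne_univ_iff_exists_notMem S).mp huniv with ⟨y, hy⟩
      refine ⟨y, fun x hx => ?_⟩
      by_contra hxy
      push_neg at hxy
      exact hy (le_trans ((monotone_cdf ν) hxy.le) hx)
    set x0 := sSup S with hx0
    have hx0mem : x0 ∈ S := hSclosed.csSup_mem hne hbdd
    have hSIic : S = Iic x0 := by
      ext y
      constructor
      · intro hy; exact le_csSup hbdd hy
      · intro hy; exact le_trans ((monotone_cdf ν) hy) hx0mem
    have hcx0 : cdf ν x0 = t := by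
      refine le_antisymm hx0mem ?_
      by_contra hlt
      push_neg at hlt
      rcases (ne_univ_iff_exists_notMem S).mp huniv with ⟨y, hy⟩
      have hyt : t < cdf ν y := lt_of_not_ge hy
      have hx0y : x0 ≤ y := by
        by_contra hyx
        push_neg at hyx
        exact hy (le_trans ((monotone_cdf ν) hyx.le) hx0mem)
      have hiv := intermediate_value_Icc hx0y hcont.continuousOn
      have htmem : t ∈ Icc (cdf ν x0) (cdf ν y) := ⟨hlt.le, hyt.le⟩
      rcases hiv htmem with ⟨z, hz, hcz⟩
      have hzS : z ∈ S := le_of_eq hcz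
      have hzx0 : z ≤ x0 := le_csSup hbdd hzS
      have : cdf ν z ≤ cdf ν x0 := (monotone_cdf ν) hzx0
      rw [hcz] at this
      linarith
    rw [hSIic]
    have hfin : ν (Iic x0) ≠ ⊤ := measure_ne_top ν _
    calc ν (Iic x0) = ENNReal.ofReal ((ν (Iic x0)).toReal) := (ENNReal.ofReal_toReal hfin).symm
    _ = ENNReal.ofReal t := by rw [← hc, hcx0]


/-- `F` is a regular conditional distribution function of the real random variable `X` given
the random element `Z`: for each conditioning value `z`, `F z` is monotone and
right-continuous, `F · x` is measurable, and `fun ω => F (Z ω) x` is a version of the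
conditional probability `P(X ≤ x | σ(Z))` for every `x`. -/
def IsRegCondCDF {Ω ζ : Type*} [MeasurableSpace Ω] [MeasurableSpace ζ]
    (μ : MeasureTheory.Measure Ω) (X : Ω → ℝ) (Z : Ω → ζ) (F : ζ → ℝ → ℝ) : Prop :=
  (∀ z, Monotone (F z)) ∧
  (∀ z x, ContinuousWithinAt (F z) (Set.Ici x) x) ∧
  (∀ x, Measurable fun z => F z x) ∧
  (∀ x : ℝ, (fun ω => F (Z ω) x)
    =ᵐ[μ] μ[Set.indicator {ω | X ω ≤ x} (fun _ => (1 : ℝ))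
      | MeasurableSpace.comap Z inferInstance])

/-- If `X = h(Z, V)` with `h` strictly increasing in its second argument
and `V` independent of `Z` with atomless distribution, then the conditional rank
`R = F_{X|Z}(X | Z)` is uniformly distributed on `[0, 1]`: its law is the uniform
probability measure on `[0,1]` (Lebesgue measure restricted to `[0,1]`). -/
theorem conditional_rank_uniform
    {Ω : Type*} [MeasurableSpace Ω] (μ : Measure Ω) [IsProbabilityMeasure μ]
    {dz : ℕ} (Z : Ω → Fin dz → ℝ) (hZ : Measurable Z)
    (V : Ω → ℝ) (hV : Measurable V)
    (hVatomless : ∀ v : ℝ, μ {ω | V ω = v} = 0)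
    (h : (Fin dz → ℝ) → ℝ → ℝ)
    (hhmeas : Measurable fun p : (Fin dz → ℝ) × ℝ => h p.1 p.2)
    (hhmono : ∀ z, StrictMono (h z))
    (X : Ω → ℝ) (hX : X = fun ω => h (Z ω) (V ω))
    (hindep : IndepFun V Z μ)
    (F : (Fin dz → ℝ) → ℝ → ℝ) (hF : IsRegCondCDF μ X Z F)
    (R : Ω → ℝ) (hR : R = fun ω => F (Z ω) (X ω)) :
    μ.map R = volume.restrict (Set.Icc (0 : ℝ) 1) := by
  obtain ⟨hFmono, hFrc, hFmeas, hFcond⟩ := hF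
  have hXmeas : Measurable X := by rw [hX]; exact hhmeas.comp (hZ.prodMk hV)
  have hhz : ∀ z, Measurable (h z) := fun z => hhmeas.comp measurable_prodMk_left
  set μZ := μ.map Z with hμZ
  set μV := μ.map V with hμV
  haveI : IsProbabilityMeasure μZ := Measure.isProbabilityMeasure_map hZ.aemeasurable
  haveI : IsProbabilityMeasure μV := Measure.isProbabilityMeasure_map hV.aemeasurable
  set g : (Fin dz → ℝ) × ℝ → (Fin dz → ℝ) × ℝ := fun p => (p.1, h p.1 p.2) with hg
  have hgmeas : Measurable g := measurable_fst.prodMk hhmeas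
  set ν : (Fin dz → ℝ) → Measure ℝ := fun z => μV.map (h z) with hν
  haveI hνprob : ∀ z, IsProbabilityMeasure (ν z) := fun z =>
    Measure.isProbabilityMeasure_map (hhz z).aemeasurable
  -- atomlessness of the conditional laws
  have hνatomless : ∀ z x, ν z {x} = 0 := by
    intro z x
    have : ν z {x} = μV ((h z) ⁻¹' {x}) := by
      simp only [hν]
      rw [Measure.map_apply (hhz z) (measurableSet_singleton x)]
    rw [this]
    rcases Set.eq_empty_or_nonempty ((h z) ⁻¹' {x}) with he | hne
    · simp [he]
    · obtain ⟨v0, hv0⟩ := hne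
      have hsub : (h z) ⁻¹' {x} ⊆ {v0} := by
        intro v hv
        have : h z v = h z v0 := by
          rw [Set.mem_preimage, Set.mem_singleton_iff] at hv hv0
          rw [hv, hv0]
        exact Set.mem_singleton_iff.mpr ((hhmono z).injective this)
      refine measure_mono_null hsub ?_
      have : μV {v0} = μ {ω | V ω = v0} := by
        rw [hμV, Measure.map_apply hV (measurableSet_singleton v0)]
        rfl
      rw [this]
      exact hVatomless v0
  -- the joint law
  have hρ : μ.map (fun ω => (Z ω, X ω)) = (μZ.prod μV).map g := by
    have h1 : μ.map (fun ω => (Z ω, V ω)) = μZ.prod μV :=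
      (indepFun_iff_map_prod_eq_prod_map_map hZ.aemeasurable hV.aemeasurable).mp hindep.symm
    rw [← h1, Measure.map_map hgmeas (hZ.prodMk hV)]
    congr 1
    funext ω
    simp only [hg, Function.comp_apply, hX]
  set ρ := (μZ.prod μV).map g with hρdef
  have hsection : ∀ {s : Set ((Fin dz → ℝ) × ℝ)}, MeasurableSet s →
      ρ s = ∫⁻ z, μV (Prod.mk z ⁻¹' (g ⁻¹' s)) ∂μZ := by
    intro s hs
    rw [hρdef, Measure.map_apply hgmeas hs, Measure.prod_apply (hgmeas hs)]
  -- joint measurability of the conditional CDF candidate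
  have hGjoint : Measurable fun p : (Fin dz → ℝ) × ℝ => ν p.1 (Set.Iic p.2) := by
    have hW : MeasurableSet {q : ((Fin dz → ℝ) × ℝ) × ℝ | h q.1.1 q.2 ≤ q.1.2} :=
      measurableSet_le
        (hhmeas.comp ((measurable_fst.comp measurable_fst).prodMk measurable_snd))
        (measurable_snd.comp measurable_fst)
    have h1 := measurable_measure_prodMk_left (ν := μV) hW
    have h2 : ∀ p : (Fin dz → ℝ) × ℝ,
        μV (Prod.mk p ⁻¹' {q : ((Fin dz → ℝ) × ℝ) × ℝ | h q.1.1 q.2 ≤ q.1.2})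
          = ν p.1 (Set.Iic p.2) := by
      intro p
      simp only [hν]
      rw [Measure.map_apply (hhz p.1) measurableSet_Iic]
      rfl
    simp only [h2] at h1
    exact h1
  -- the version identity at a fixed point
  have hver : ∀ x : ℝ, (fun z => F z x) =ᵐ[μZ] fun z => (ν z (Set.Iic x)).toReal := by
    intro x
    have hFcomp_int : Integrable (fun ω => F (Z ω) x) μ :=
      integrable_condExp.congr (hFcond x).symm
    have hFint : Integrable (fun z => F z x) μZ := by
      rw [hμZ, integrable_map_measure (hFmeas x).aestronglyMeasurable hZ.aemeasurable]
      exact hFcomp_int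
    have hGmeasx : Measurable fun z => ν z (Set.Iic x) :=
      hGjoint.comp (measurable_id.prodMk measurable_const)
    have hGint : Integrable (fun z => (ν z (Set.Iic x)).toReal) μZ := by
      refine ⟨hGmeasx.ennreal_toReal.aestronglyMeasurable,
        HasFiniteIntegral.of_bounded (C := 1) (Eventually.of_forall fun z => ?_)⟩
      rw [Real.norm_eq_abs, abs_of_nonneg ENNReal.toReal_nonneg]
      have h1 : ν z (Set.Iic x) ≤ 1 := prob_le_one
      have h2 := ENNReal.toReal_mono ENNReal.one_ne_top h1
      simpa using h2
    refine ae_eq_of_forall_setIntegral_eq_of_sigmaFinite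
      (fun s _ _ => hFint.integrableOn) (fun s _ _ => hGint.integrableOn) ?_
    intro s hs _
    have hXx : MeasurableSet {ω | X ω ≤ x} := hXmeas measurableSet_Iic
    have hZs : MeasurableSet[MeasurableSpace.comap Z inferInstance] (Z ⁻¹' s) := ⟨s, hs, rfl⟩
    have hind_int : Integrable (Set.indicator {ω | X ω ≤ x} (fun _ => (1:ℝ))) μ :=
      (integrable_const (1:ℝ)).indicator hXx
    have hL1 : ∫ z in s, F z x ∂μZ = ∫ ω in Z ⁻¹' s, F (Z ω) x ∂μ := by
      rw [hμZ, setIntegral_map hs (hFmeas x).aestronglyMeasurable hZ.aemeasurable]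
    have hL2 : ∫ ω in Z ⁻¹' s, F (Z ω) x ∂μ
        = ∫ ω in Z ⁻¹' s, (μ[Set.indicator {ω | X ω ≤ x} (fun _ => (1:ℝ))
            | MeasurableSpace.comap Z inferInstance]) ω ∂μ :=
      integral_congr_ae (ae_restrict_of_ae (hFcond x))
    have hL3 : ∫ ω in Z ⁻¹' s, (μ[Set.indicator {ω | X ω ≤ x} (fun _ => (1:ℝ))
            | MeasurableSpace.comap Z inferInstance]) ω ∂μ
        = ∫ ω in Z ⁻¹' s, Set.indicator {ω | X ω ≤ x} (fun _ => (1:ℝ)) ω ∂μ :=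
      setIntegral_condExp hZ.comap_le hind_int hZs
    have hL4 : ∫ ω in Z ⁻¹' s, Set.indicator {ω | X ω ≤ x} (fun _ => (1:ℝ)) ω ∂μ
        = (μ (Z ⁻¹' s ∩ {ω | X ω ≤ x})).toReal := by
      rw [integral_indicator hXx, setIntegral_const, measureReal_def, Measure.restrict_apply hXx,
        smul_eq_mul, mul_one, Set.inter_comm]
    have hR1 : ∫ z in s, (ν z (Set.Iic x)).toReal ∂μZ
        = (∫⁻ z in s, ν z (Set.Iic x) ∂μZ).toReal := by
      refine integral_toReal (hGmeasx.aemeasurable.restrict) (Eventually.of_forall fun z => ?_)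
      exact lt_of_le_of_lt prob_le_one ENNReal.one_lt_top
    have hR2 : ∫⁻ z in s, ν z (Set.Iic x) ∂μZ = ρ (s ×ˢ Set.Iic x) := by
      rw [hsection (hs.prod measurableSet_Iic), ← lintegral_indicator hs]
      congr 1
      funext z
      by_cases hz : z ∈ s
      · rw [Set.indicator_of_mem hz]
        simp only [hν]
        rw [Measure.map_apply (hhz z) measurableSet_Iic]
        congr 1
        ext v
        simp [hg, hz]
      · rw [Set.indicator_of_notMem hz]
        have : Prod.mk z ⁻¹' (g ⁻¹' (s ×ˢ Set.Iic x)) = ∅ := by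
          ext v; simp [hg, hz]
        rw [this, measure_empty]
    have hR3 : ρ (s ×ˢ Set.Iic x) = μ (Z ⁻¹' s ∩ {ω | X ω ≤ x}) := by
      rw [← hρ, Measure.map_apply (hZ.prodMk hXmeas) (hs.prod measurableSet_Iic)]
      have hpre2 : (fun a => (Z a, X a)) ⁻¹' (s ×ˢ Set.Iic x) = Z ⁻¹' s ∩ {ω | X ω ≤ x} := by
        ext ω
        simp [Set.mem_prod, Set.mem_Iic]
      rw [hpre2]
    simp only [hL1, hL2, hL3, hL4, hR1, hR2, hR3]
  -- full a.e. identity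
  have hae : ∀ᵐ z ∂μZ, ∀ x : ℝ, F z x = (ν z (Set.Iic x)).toReal := by
    have hq : ∀ᵐ z ∂μZ, ∀ q : ℚ, F z (q:ℝ) = (ν z (Set.Iic (q:ℝ))).toReal :=
      ae_all_iff.mpr fun q => hver (q:ℝ)
    filter_upwards [hq] with z hz
    intro x
    obtain ⟨u, hu_anti, hu_mem, hu_tendsto⟩ := exists_seq_strictAnti_tendsto x
    choose q hq1 hq2 using fun n => exists_rat_btwn (hu_mem n)
    have hqx : Tendsto (fun n => (q n : ℝ)) atTop (𝓝 x) :=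
      tendsto_of_tendsto_of_tendsto_of_le_of_le tendsto_const_nhds hu_tendsto
        (fun n => (hq1 n).le) (fun n => (hq2 n).le)
    have hqwithin : Tendsto (fun n => (q n : ℝ)) atTop (𝓝[Set.Ici x] x) :=
      tendsto_nhdsWithin_of_tendsto_nhds_of_eventually_within _ hqx
        (Eventually.of_forall fun n => (hq1 n).le)
    have h1 : Tendsto (fun n => F z (q n : ℝ)) atTop (𝓝 (F z x)) :=
      (hFrc z x).tendsto.comp hqwithin
    have h2 : Tendsto (fun n => (ν z (Set.Iic ((q n : ℝ)))).toReal) atTop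
        (𝓝 ((ν z (Set.Iic x)).toReal)) := by
      have h3 : Tendsto (fun n => cdf (ν z) (q n : ℝ)) atTop (𝓝 (cdf (ν z) x)) :=
        ((cdf (ν z)).right_continuous x).tendsto.comp hqwithin
      simpa only [cdf_eq_real, measureReal_def] using h3
    exact tendsto_nhds_unique (h1.congr fun n => hz (q n)) h2
  -- measurability of R
  have hRmeas : Measurable R := by
    rw [hR]
    exact (measurable_uncurry_of_rightCont hFmeas hFrc).comp (hZ.prodMk hXmeas)
  haveI : IsProbabilityMeasure (μ.map R) := Measure.isProbabilityMeasure_map hRmeas.aemeasurable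
  -- a.e. replacement of R
  have hRg_ae : R =ᵐ[μ] fun ω => (ν (Z ω) (Set.Iic (X ω))).toReal := by
    filter_upwards [ae_of_ae_map hZ.aemeasurable hae] with ω hω
    rw [hR]
    exact hω (X ω)
  have hBmeas : ∀ t : ℝ, MeasurableSet {p : (Fin dz → ℝ) × ℝ | (ν p.1 (Set.Iic p.2)).toReal ≤ t} :=
    fun t => measurableSet_le hGjoint.ennreal_toReal measurable_const
  have hmap_eq : ∀ t : ℝ, μ.map R (Set.Iic t)
      = μ {ω | (ν (Z ω) (Set.Iic (X ω))).toReal ≤ t} := by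
    intro t
    rw [Measure.map_apply hRmeas measurableSet_Iic]
    refine measure_congr ?_
    filter_upwards [hRg_ae] with ω hω
    have heq : (R ω ≤ t) = (((ν (Z ω)) (Set.Iic (X ω))).toReal ≤ t) := by rw [hω]
    exact heq
  have hmain : ∀ t : ℝ, 0 ≤ t → t ≤ 1 → μ.map R (Set.Iic t) = ENNReal.ofReal t := by
    intro t ht0 ht1
    rw [hmap_eq t]
    have hset : {ω | (ν (Z ω) (Set.Iic (X ω))).toReal ≤ t}
        = (fun ω => (Z ω, X ω)) ⁻¹' {p : (Fin dz → ℝ) × ℝ | (ν p.1 (Set.Iic p.2)).toReal ≤ t} :=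
      rfl
    rw [hset, ← Measure.map_apply (hZ.prodMk hXmeas) (hBmeas t), hρ,
      hsection (hBmeas t)]
    have hinner : ∀ z, μV (Prod.mk z ⁻¹'
        (g ⁻¹' {p : (Fin dz → ℝ) × ℝ | (ν p.1 (Set.Iic p.2)).toReal ≤ t}))
        = ENNReal.ofReal t := by
      intro z
      have hmeasx : Measurable fun x => (ν z (Set.Iic x)).toReal :=
        (hGjoint.comp (measurable_const.prodMk measurable_id)).ennreal_toReal
      have hpre : Prod.mk z ⁻¹'
          (g ⁻¹' {p : (Fin dz → ℝ) × ℝ | (ν p.1 (Set.Iic p.2)).toReal ≤ t})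
          = (h z) ⁻¹' {x | (ν z (Set.Iic x)).toReal ≤ t} := rfl
      rw [hpre, ← Measure.map_apply (hhz z) (measurableSet_le hmeasx measurable_const)]
      exact cdf_comp_uniform (ν z) (hνatomless z) ht0 ht1
    simp only [hinner]
    rw [lintegral_const, measure_univ, mul_one]
  -- conclusion by extensionality on Iic
  refine Measure.ext_of_Iic (μ.map R) _ fun t => ?_
  rw [Measure.restrict_apply measurableSet_Iic]
  rcases lt_or_ge t 0 with ht | ht0
  · have hL : μ.map R (Set.Iic t) = 0 := by
      rw [hmap_eq t]
      convert measure_empty (μ := μ)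
      ext ω
      simp only [Set.mem_setOf_eq, Set.mem_empty_iff_false, iff_false, not_le]
      exact lt_of_lt_of_le ht ENNReal.toReal_nonneg
    rw [hL]
    have : Set.Iic t ∩ Set.Icc (0:ℝ) 1 = ∅ := by
      ext y
      simp only [Set.mem_inter_iff, Set.mem_Iic, Set.mem_Icc, Set.mem_empty_iff_false, iff_false]
      rintro ⟨h1, h2, h3⟩
      linarith
    rw [this, measure_empty]
  rcases le_or_gt t 1 with ht1 | ht1
  · rw [hmain t ht0 ht1]
    have : Set.Iic t ∩ Set.Icc (0:ℝ) 1 = Set.Icc 0 t := by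
      ext y
      simp only [Set.mem_inter_iff, Set.mem_Iic, Set.mem_Icc]
      constructor
      · rintro ⟨h1, h2, h3⟩; exact ⟨h2, h1⟩
      · rintro ⟨h1, h2⟩; exact ⟨h2, h1, h2.trans ht1⟩
    rw [this, Real.volume_Icc, sub_zero]
  · have h1 : μ.map R (Set.Iic 1) = 1 := by
      rw [hmain 1 zero_le_one le_rfl]
      simp
    have hL : μ.map R (Set.Iic t) = 1 := by
      refine le_antisymm prob_le_one ?_
      rw [← h1]
      exact measure_mono (Set.Iic_subset_Iic.mpr ht1.le)
    rw [hL]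
    have : Set.Iic t ∩ Set.Icc (0:ℝ) 1 = Set.Icc 0 1 := by
      ext y
      simp only [Set.mem_inter_iff, Set.mem_Iic, Set.mem_Icc]
      constructor
      · rintro ⟨h1, h2, h3⟩; exact ⟨h2, h3⟩
      · rintro ⟨hy0, hy1⟩; exact ⟨hy1.trans ht1.le, hy0, hy1⟩
    rw [this, Real.volume_Icc, sub_zero, ENNReal.ofReal_one]
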